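/- arXiv:1806.07271 — 5 statements merged into one kernel-verified Lean document; each statement's English description precedes it below -/
import Mathlib

section
/- Fix λ > 0 and define f₁(λ) = λ + e^{-λ} − λ²/2 and recursively f_{j+1}(λ) = f₁(λ) − e^{-f_j(λ)} for j ≥ 1. Then the sequence j ↦ f_j(λ) is strictly decreasing, i.e., f_{j+1}(λ) < f_j(λ) for all j ≥ 1. -/
/-- Fix `λ > 0` and define `f₁(λ) = λ + e^{-λ} − λ²/2` and recursively
`f_{j+1}(λ) = f₁(λ) − e^{-f_j(λ)}` for `j ≥ 1`. Then the sequence `j ↦ f_j(λ)`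
is strictly decreasing: `f_{j+1}(λ) < f_j(λ)` for all `j ≥ 1`. -/
theorem fseq_strictly_decreasing_in_index (l : ℝ) (hl : 0 < l) (f : ℕ → ℝ)
    (hf1 : f 1 = l + Real.exp (-l) - l ^ 2 / 2)
    (hrec : ∀ j : ℕ, 1 ≤ j → f (j + 1) = f 1 - Real.exp (-(f j))) :
    ∀ j : ℕ, 1 ≤ j → f (j + 1) < f j := by
  intro j hj
  induction j with
  | zero => omega
  | succ k ih =>
    rcases Nat.eq_or_lt_of_le hj with h | h
    · -- k + 1 = 1, i.e. k = 0
      have hk : k = 0 := by omega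
      subst hk
      rw [hrec 1 le_rfl]
      have := Real.exp_pos (-(f 1))
      linarith
    · have hk : 1 ≤ k := by omega
      have ihk := ih hk
      have h1 := hrec (k + 1) (by omega)
      have h2 := hrec k hk
      have : Real.exp (-(f k)) < Real.exp (-(f (k + 1))) :=
        Real.exp_lt_exp.mpr (by linarith)
      linarith
end

section
/- Define f₁(λ) = λ + e^{-λ} − λ²/2 and recursively f_{j+1}(λ) = f₁(λ) − e^{-f_j(λ)}. Then for each fixed j ≥ 1, the function λ ↦ f_j(λ) is strictly decreasing on (0, ∞). -/
/-- `f₁(λ) = λ + e^{-λ} − λ²/2`. -/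
noncomputable def f1 (l : ℝ) : ℝ := l + Real.exp (-l) - l ^ 2 / 2

/-- `fseq n l` is `f_{n+1}(λ)` of the paper: `f_{j+1}(λ) = f₁(λ) − e^{-f_j(λ)}`. -/
noncomputable def fseq : ℕ → ℝ → ℝ
  | 0 => f1
  | n + 1 => fun l => f1 l - Real.exp (-(fseq n l))

lemma f1_hasDerivAt (l : ℝ) : HasDerivAt f1 (1 - Real.exp (-l) - l) l := by
  have h1 : HasDerivAt (fun x : ℝ => x) 1 l := hasDerivAt_id l
  have h2 : HasDerivAt (fun x : ℝ => Real.exp (-x)) (-Real.exp (-l)) l := by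
    have := (Real.hasDerivAt_exp (-l)).comp l ((hasDerivAt_id l).neg)
    exact this.congr_deriv (by ring)
  have h3 : HasDerivAt (fun x : ℝ => x ^ 2 / 2) l l := by
    have := (hasDerivAt_pow 2 l).div_const 2
    simpa using this
  have := (h1.add h2).sub h3
  exact this.congr_deriv (by ring)


lemma f1_strictAntiOn : StrictAntiOn f1 (Set.Ioi (0:ℝ)) := by
  have hc : ContinuousOn f1 (Set.Ioi (0:ℝ)) := by
    intro x _
    exact (f1_hasDerivAt x).continuousAt.continuousWithinAt
  apply strictAntiOn_of_deriv_neg (convex_Ioi 0) hc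
  intro x hx
  rw [interior_Ioi] at hx
  rw [(f1_hasDerivAt x).deriv]
  have hx0 : x > 0 := hx
  have := Real.add_one_lt_exp (show -x ≠ 0 by linarith)
  linarith

/-- For each fixed `j ≥ 1`, the function `λ ↦ f_j(λ)` is strictly decreasing on `(0, ∞)`. -/
theorem fseq_strictAnti_in_lambda (n : ℕ) :
    StrictAntiOn (fun l : ℝ => fseq n l) (Set.Ioi (0:ℝ)) := by
  induction n with
  | zero => simpa [fseq] using f1_strictAntiOn
  | succ n ih =>
    intro a ha b hb hab
    have h1 := f1_strictAntiOn ha hb hab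
    have h2 := ih ha hb hab
    have h3 : Real.exp (-(fseq n a)) < Real.exp (-(fseq n b)) :=
      Real.exp_lt_exp.mpr (by simpa using h2)
    simp only [fseq]
    linarith
end

section
/- Fix λ ∈ (0, 0.9012] and define f₁(λ) = λ + e^{-λ} − λ²/2 and f_{j+1}(λ) = f₁(λ) − e^{-f_j(λ)}. If f_{B-1}(λ) = −log(e^{-λ} − λ²/2) for some B ≥ 2 (i.e., λ is a root of p_B^{rbr}), then f_{B-1}(λ) > λ, and consequently f_j(λ) > λ > 0 for all 1 ≤ j ≤ B−1. -/
lemma fseq_succ_le (l : ℝ) : ∀ n, fseq (n + 1) l ≤ fseq n l := by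
  intro n
  induction n with
  | zero =>
    show f1 l - Real.exp (-(fseq 0 l)) ≤ f1 l
    linarith [Real.exp_pos (-(fseq 0 l))]
  | succ n ih =>
    show f1 l - Real.exp (-(fseq (n + 1) l)) ≤ f1 l - Real.exp (-(fseq n l))
    have := Real.exp_le_exp.mpr (neg_le_neg ih)
    linarith

lemma fseq_anti (l : ℝ) : ∀ {m n : ℕ}, m ≤ n → fseq n l ≤ fseq m l := by
  intro m n h
  exact antitone_nat_of_succ_le (f := fun n => fseq n l) (fseq_succ_le l) h

lemma exp_9012_lt : Real.exp 0.9012 < 2.4625645 := by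
  have hx : |(0.9012 : ℝ)| ≤ 1 := by rw [abs_of_nonneg (by norm_num : (0:ℝ) ≤ 0.9012)]; norm_num
  have h := Real.exp_bound hx (by norm_num : 0 < 13)
  have h2 := abs_le.mp h
  have hs : ∑ i ∈ Finset.range 13, (0.9012 : ℝ) ^ i / i.factorial
      < 2.46255642 := by
    simp [Finset.sum_range_succ, Nat.factorial]
    norm_num
  have hb : |(0.9012 : ℝ)| ^ 13 * ((13 : ℕ).succ / ((13 : ℕ).factorial * 13))
      < 0.000000001 := by
    rw [abs_of_nonneg (by norm_num : (0:ℝ) ≤ 0.9012)]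
    norm_num [Nat.factorial]
  have := h2.1
  linarith

lemma g_pos (l : ℝ) (hl : 0 < l) (hl' : l ≤ 0.9012) :
    0 < Real.exp (-l) - l ^ 2 / 2 := by
  have h1 : Real.exp (-(0.9012 : ℝ)) ≤ Real.exp (-l) :=
    Real.exp_le_exp.mpr (by linarith)
  have h2 : l ^ 2 / 2 ≤ (0.9012 : ℝ) ^ 2 / 2 := by nlinarith
  have h3 : (0.40608072 : ℝ) < Real.exp (-(0.9012 : ℝ)) := by
    rw [Real.exp_neg]
    rw [lt_inv_comm₀ (by norm_num) (Real.exp_pos _)]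
    calc Real.exp 0.9012 < 2.4625645 := exp_9012_lt
      _ ≤ (0.40608072 : ℝ)⁻¹ := by norm_num
  have : (0.9012 : ℝ) ^ 2 / 2 = 0.40608072 := by norm_num
  linarith

/-- Fix `λ ∈ (0, 0.9012]` and `B ≥ 2`. If `f_{B-1}(λ) = −log(e^{-λ} − λ²/2)`
(i.e. `λ` is a root of `p_B^{rbr}`), then `f_{B-1}(λ) > λ`, and consequently
`f_j(λ) > λ > 0` for all `1 ≤ j ≤ B−1`. -/
theorem thresholds_exceed_lambda (l : ℝ) (hl : 0 < l) (hl' : l ≤ 0.9012)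
    (B : ℕ) (hB : 2 ≤ B)
    (hroot : fseq (B - 2) l = -Real.log (Real.exp (-l) - l ^ 2 / 2)) :
    l < fseq (B - 2) l ∧ ∀ j : ℕ, 1 ≤ j → j ≤ B - 1 → l < fseq (j - 1) l := by
  have hg := g_pos l hl hl'
  have hlt : Real.exp (-l) - l ^ 2 / 2 < Real.exp (-l) := by nlinarith
  have hlog : Real.log (Real.exp (-l) - l ^ 2 / 2) < -l := by
    calc Real.log (Real.exp (-l) - l ^ 2 / 2) < Real.log (Real.exp (-l)) :=
          Real.log_lt_log hg hlt
      _ = -l := Real.log_exp _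
  have hmain : l < fseq (B - 2) l := by rw [hroot]; linarith
  refine ⟨hmain, fun j hj1 hj2 => ?_⟩
  have hle : j - 1 ≤ B - 2 := by omega
  exact lt_of_lt_of_le hmain (fseq_anti l hle)
end

section
/- Let λ ∈ (0, 0.9012) so that e^{-λ} − λ²/2 > 0, let y₄(t) = max(λ, t), and let x₃ = −log(e^{-λ} − λ²/2). Then x₃ satisfies the equation e^{x₃}·∫₀^{x₃} ((1/2)y₄(τ)² − λ·y₄(τ))·e^{-τ} dτ + (1/2)x₃² − λ·x₃ = λ − x₃, and moreover x₃ > λ. -/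
open MeasureTheory

/-- For `λ ∈ (0, 0.9012)` (so `e^{-λ} − λ²/2 > 0`), `y₄(t) = max(λ, t)` and
`x₃ = −log(e^{-λ} − λ²/2)`, the threshold `x₃` satisfies the KKT equation
`e^{x₃}·∫₀^{x₃}((1/2)y₄(τ)² − λy₄(τ))e^{-τ}dτ + (1/2)x₃² − λx₃ = λ − x₃`,
and moreover `x₃ > λ`. -/
theorem ibr_threshold_x3 (l : ℝ) (hl : l ∈ Set.Ioo (0:ℝ) 0.9012)
    (y4 : ℝ → ℝ) (hy4 : ∀ t, y4 t = max l t)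
    (x3 : ℝ) (hx3 : x3 = -Real.log (Real.exp (-l) - l ^ 2 / 2)) :
    0 < Real.exp (-l) - l ^ 2 / 2 ∧
    Real.exp x3 * (∫ τ in Set.Ioo (0:ℝ) x3,
        ((1/2) * (y4 τ) ^ 2 - l * y4 τ) * Real.exp (-τ))
      + (1/2) * x3 ^ 2 - l * x3 = l - x3 ∧
    l < x3 := by
  obtain ⟨hl0, hl1⟩ := hl
  -- Part 1: positivity of u := exp(-l) - l²/2
  have hu : 0 < Real.exp (-l) - l ^ 2 / 2 := by
    have hb := Real.exp_bound' (x := 0.9012) (by norm_num) (by norm_num) (n := 12) (by norm_num)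
    have hsum : (∑ m ∈ Finset.range 12, (0.9012:ℝ) ^ m / m.factorial) +
        (0.9012:ℝ) ^ 12 * (12 + 1) / (Nat.factorial 12 * 12) < 2 / 0.9012 ^ 2 := by
      simp only [Finset.sum_range_succ, Finset.sum_range_zero]
      norm_num [Nat.factorial]
    have hexp : Real.exp 0.9012 < 2 / 0.9012 ^ 2 := lt_of_le_of_lt hb hsum
    have h1 : Real.exp (-l) > Real.exp (-0.9012) := Real.exp_lt_exp.2 (by linarith)
    have h2 : Real.exp (-0.9012) = (Real.exp 0.9012)⁻¹ := by rw [Real.exp_neg]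
    have h3 : (Real.exp 0.9012)⁻¹ > (2 / 0.9012 ^ 2)⁻¹ :=
      inv_strictAnti₀ (by positivity) hexp
    have h4 : ((2:ℝ) / 0.9012 ^ 2)⁻¹ = 0.9012 ^ 2 / 2 := by norm_num
    have h5 : l ^ 2 / 2 < 0.9012 ^ 2 / 2 := by nlinarith
    rw [h4] at h3
    linarith [h1, h2, h3]
  -- Part 3: l < x3
  have hlx : l < x3 := by
    have hlt : Real.exp (-l) - l ^ 2 / 2 < Real.exp (-l) := by nlinarith
    have := Real.log_lt_log hu hlt
    rw [Real.log_exp] at this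
    rw [hx3]
    linarith
  refine ⟨hu, ?_, hlx⟩
  have h0x : (0:ℝ) < x3 := hl0.trans hlx
  -- exp x3 * u = 1
  have hex : Real.exp x3 * (Real.exp (-l) - l ^ 2 / 2) = 1 := by
    rw [hx3, Real.exp_neg, Real.exp_log hu]
    exact inv_mul_cancel₀ hu.ne'
  -- Evaluate the integral
  have hint : ∫ τ in Set.Ioo (0:ℝ) x3, ((1/2) * (y4 τ) ^ 2 - l * y4 τ) * Real.exp (-τ)
      = (l^2/2) * (Real.exp (-l) - 1)
        + (Real.exp (-x3) * (l*(x3+1) - (x3^2/2 + x3 + 1))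
           - Real.exp (-l) * (l*(l+1) - (l^2/2 + l + 1))) := by
    simp only [hy4]
    have hcont : Continuous
        (fun τ : ℝ => ((1/2) * (max l τ) ^ 2 - l * max l τ) * Real.exp (-τ)) := by
      fun_prop
    rw [← MeasureTheory.integral_Ioc_eq_integral_Ioo,
        ← intervalIntegral.integral_of_le h0x.le]
    rw [← intervalIntegral.integral_add_adjacent_intervals
        (hcont.intervalIntegrable 0 l) (hcont.intervalIntegrable l x3)]
    have e1 : (∫ τ in (0:ℝ)..l, ((1/2) * (max l τ) ^ 2 - l * max l τ) * Real.exp (-τ))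
        = (l^2/2) * (Real.exp (-l) - 1) := by
      have hcg : ∀ τ ∈ Set.uIcc (0:ℝ) l,
          ((1/2) * (max l τ) ^ 2 - l * max l τ) * Real.exp (-τ)
          = (-(l^2/2)) * Real.exp (-τ) := by
        intro τ hτ
        rw [Set.uIcc_of_le hl0.le] at hτ
        rw [max_eq_left hτ.2]
        ring
      rw [intervalIntegral.integral_congr hcg]
      have hftc : ∀ τ ∈ Set.uIcc (0:ℝ) l,
          HasDerivAt (fun t : ℝ => (l^2/2) * Real.exp (-t)) ((-(l^2/2)) * Real.exp (-τ)) τ := by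
        intro τ _
        have h := ((Real.hasDerivAt_exp (-τ)).comp τ ((hasDerivAt_id τ).neg)).const_mul (l^2/2)
        exact h.congr_deriv (by ring)
      rw [intervalIntegral.integral_eq_sub_of_hasDerivAt hftc
        ((by fun_prop :
          Continuous fun τ : ℝ => (-(l^2/2)) * Real.exp (-τ)).intervalIntegrable 0 l)]
      simp [Real.exp_zero]
      ring
    have e2 : (∫ τ in l..x3, ((1/2) * (max l τ) ^ 2 - l * max l τ) * Real.exp (-τ))
        = Real.exp (-x3) * (l*(x3+1) - (x3^2/2 + x3 + 1))
          - Real.exp (-l) * (l*(l+1) - (l^2/2 + l + 1)) := by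
      have hcg : ∀ τ ∈ Set.uIcc l x3,
          ((1/2) * (max l τ) ^ 2 - l * max l τ) * Real.exp (-τ)
          = ((1/2) * τ ^ 2 - l * τ) * Real.exp (-τ) := by
        intro τ hτ
        rw [Set.uIcc_of_le hlx.le] at hτ
        rw [max_eq_right hτ.1]
      rw [intervalIntegral.integral_congr hcg]
      have hftc : ∀ τ ∈ Set.uIcc l x3,
          HasDerivAt (fun t : ℝ => Real.exp (-t) * (l*(t+1) - (t^2/2 + t + 1)))
            (((1/2) * τ ^ 2 - l * τ) * Real.exp (-τ)) τ := by
        intro τ _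
        have h1 : HasDerivAt (fun t : ℝ => Real.exp (-t)) (-Real.exp (-τ)) τ := by
          have := (Real.hasDerivAt_exp (-τ)).comp τ ((hasDerivAt_id τ).neg)
          exact this.congr_deriv (by ring)
        have h2 : HasDerivAt (fun t : ℝ => l*(t+1) - (t^2/2 + t + 1)) (l - (τ + 1)) τ := by
          have ha : HasDerivAt (fun t : ℝ => l*(t+1)) l τ := by
            simpa using ((hasDerivAt_id τ).add_const 1).const_mul l
          have hb : HasDerivAt (fun t : ℝ => t^2/2 + t + 1) (τ + 1) τ := by
            have hp : HasDerivAt (fun t : ℝ => t^2) (2*τ) τ := by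
              simpa using hasDerivAt_pow 2 τ
            simpa using ((hp.div_const 2).add (hasDerivAt_id τ)).add_const 1
          exact ha.sub hb
        have h := h1.mul h2
        exact h.congr_deriv (by ring)
      rw [intervalIntegral.integral_eq_sub_of_hasDerivAt hftc
        ((by fun_prop :
          Continuous fun τ : ℝ => ((1/2) * τ ^ 2 - l * τ) * Real.exp (-τ)).intervalIntegrable l x3)]
    rw [e1, e2]
  rw [hint]
  -- Final algebra, using exp x3 * exp (-x3) = 1 and hex
  have hX : Real.exp x3 * Real.exp (-x3) = 1 := by
    rw [← Real.exp_add]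
    simp
  linear_combination hex + (l*(x3+1) - (x3^2/2 + x3 + 1)) * hX
end

section
/- Let λ₁ ≈ 0.9012 be the unique positive root of e^{-λ} = λ²/2 and, for B ≥ 2, let λ_B be a root of p_B(λ) = e^{-λ} − λ²/2 − e^{-f_{B-1}(λ)} where f₁(λ) = λ + e^{-λ} − λ²/2 and f_{j+1}(λ) = f₁(λ) − e^{-f_j(λ)}. If λ_{B} and λ_{B+1} both exist in (0, λ₁), then λ_{B+1} ≤ λ_B; that is, the optimal long term average age in the RBR model is nonincreasing in the battery size B. -/
lemma f1_anti : Antitone f1 := by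
  have hdiff : Differentiable ℝ f1 := fun l => (f1_hasDerivAt l).differentiableAt
  apply antitone_of_deriv_nonpos hdiff
  intro x
  rw [(f1_hasDerivAt x).deriv]
  have := Real.add_one_le_exp (-x)
  linarith

lemma fseq_anti_s19 : ∀ n, Antitone (fseq n) := by
  intro n
  induction n with
  | zero => exact f1_anti
  | succ n ih =>
    intro a b hab
    have h1 := f1_anti hab
    have h2 : fseq n b ≤ fseq n a := ih hab
    have h3 : Real.exp (-(fseq n a)) ≤ Real.exp (-(fseq n b)) :=
      Real.exp_le_exp.mpr (by linarith)
    simp only [fseq]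
    linarith

lemma fseq_succ_lt (l : ℝ) : ∀ n, fseq (n + 1) l < fseq n l := by
  intro n
  induction n with
  | zero =>
    have := Real.exp_pos (-(f1 l))
    show f1 l - Real.exp (-(f1 l)) < f1 l
    linarith
  | succ n ih =>
    have h : Real.exp (-(fseq n l)) < Real.exp (-(fseq (n + 1) l)) :=
      Real.exp_lt_exp.mpr (by linarith)
    show f1 l - Real.exp (-(fseq (n + 1) l)) < f1 l - Real.exp (-(fseq n l))
    linarith

/-- Let `λ₁` be the unique positive root of `e^{-λ} = λ²/2`, and for `B ≥ 2` let
`λ_B ∈ Set.Ioo 0 λ₁` be a root of `p_B(λ) = e^{-λ} − λ²/2 − e^{-f_{B-1}(λ)}`. If `λ_B`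
and `λ_{B+1}` both exist in `(0, λ₁)`, then `λ_{B+1} ≤ λ_B`: the optimal long term
average age in the RBR model is nonincreasing in the battery size `B`. -/
theorem optimal_age_nonincreasing_in_B (B : ℕ) (hB : 2 ≤ B)
    (l₁ lB lB1 : ℝ) (hl₁pos : 0 < l₁) (hl₁ : Real.exp (-l₁) = l₁ ^ 2 / 2)
    (hlB : lB ∈ Set.Ioo 0 l₁) (hlB1 : lB1 ∈ Set.Ioo 0 l₁)
    (hrootB : Real.exp (-lB) - lB ^ 2 / 2 - Real.exp (-(fseq (B - 2) lB)) = 0)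
    (hrootB1 :
      Real.exp (-lB1) - lB1 ^ 2 / 2 - Real.exp (-(fseq (B - 1) lB1)) = 0) :
    lB1 ≤ lB := by
  set n := B - 2 with hn
  have hB1 : B - 1 = n + 1 := by omega
  rw [hB1] at hrootB1
  by_contra hlt
  push_neg at hlt
  -- p_B(lB1) > 0
  have hstep : fseq (n + 1) lB1 < fseq n lB1 := fseq_succ_lt lB1 (n := n)
  have hpos : Real.exp (-(fseq n lB1)) < Real.exp (-(fseq (n + 1) lB1)) :=
    Real.exp_lt_exp.mpr (by linarith)
  -- strict monotonicity of p_B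
  have he : Real.exp (-lB1) < Real.exp (-lB) := Real.exp_lt_exp.mpr (by linarith)
  have hsq : lB ^ 2 / 2 < lB1 ^ 2 / 2 := by
    have h0 : 0 < lB := hlB.1
    nlinarith
  have hfa : fseq n lB1 ≤ fseq n lB := fseq_anti_s19 n hlt.le
  have hexp : Real.exp (-(fseq n lB)) ≤ Real.exp (-(fseq n lB1)) :=
    Real.exp_le_exp.mpr (by linarith)
  linarith
end
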